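/- arXiv:2211.09432 — 2 statements merged into one kernel-verified Lean document; each statement's English description precedes it below -/
import Mathlib

section
/- Let ℓ ≥ 3 and k ≥ 0 be integers, and write n = k + d(ℓ−1) + r with d ≥ 0 and 0 ≤ r < ℓ−1. Then the graph G₁(n,k,ℓ) = K_k ∨ (dK_{ℓ−1} ∪ K_r) contains no subgraph isomorphic to P_ℓ ∪ kS_{ℓ−1}. -/
open SimpleGraph

/-- The number of edges of a simple graph. -/
noncomputable def edgeCount {V : Type*} (G : SimpleGraph V) : ℕ :=
  Nat.card G.edgeSet

/-- `Contains G H` means `G` contains a subgraph isomorphic to `H`,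
i.e. there is an injective graph homomorphism from `H` to `G`. -/
def Contains {V W : Type*} (G : SimpleGraph V) (H : SimpleGraph W) : Prop :=
  ∃ f : H →g G, Function.Injective f

/-- The Turán number `ex(n, H)`: the maximum number of edges of a simple graph on `n`
vertices containing no subgraph isomorphic to `H`. -/
noncomputable def exNum (n : ℕ) {W : Type*} (H : SimpleGraph W) : ℕ :=
  sSup {m : ℕ | ∃ G : SimpleGraph (Fin n), ¬ Contains G H ∧ edgeCount G = m}

/-- The disjoint union of `k` copies of `G`. -/
def copies {V : Type*} (k : ℕ) (G : SimpleGraph V) : SimpleGraph (Fin k × V) where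
  Adj u v := u.1 = v.1 ∧ G.Adj u.2 v.2
  symm := ⟨fun u v h => ⟨h.1.symm, G.adj_symm h.2⟩⟩
  loopless := ⟨fun u h => G.irrefl h.2⟩

/-- The join `G ∨ H` of two graphs: their disjoint union together with all edges
between the two vertex sets. -/
def graphJoin {V W : Type*} (G : SimpleGraph V) (H : SimpleGraph W) : SimpleGraph (V ⊕ W) where
  Adj u v := (G.sum H).Adj u v ∨ (u.isLeft ∧ v.isRight) ∨ (u.isRight ∧ v.isLeft)
  symm := ⟨fun u v h => by
    rcases h with h | ⟨h1, h2⟩ | ⟨h1, h2⟩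
    · exact Or.inl ((G.sum H).adj_symm h)
    · exact Or.inr (Or.inr ⟨h2, h1⟩)
    · exact Or.inr (Or.inl ⟨h2, h1⟩)⟩
  loopless := ⟨fun u => by cases u <;> simp [SimpleGraph.sum]⟩

/-- The star with `m` leaves (a graph on `m + 1` vertices). -/
def starGraph' (m : ℕ) : SimpleGraph (Fin 1 ⊕ Fin m) :=
  completeBipartiteGraph (Fin 1) (Fin m)

/-- Component label of a vertex of `d K_b ∪ K_c`. -/
def G1comp {a b c : ℕ} : (Fin a × Fin b) ⊕ Fin c → Option (Fin a) :=
  Sum.elim (fun p => some p.1) fun _ => none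

/-- Position within a component. -/
def G1phi {a b c : ℕ} (h : c ≤ b) : (Fin a × Fin b) ⊕ Fin c → Fin b :=
  Sum.elim Prod.snd (Fin.castLE h)

lemma G1key {a b c : ℕ} (hcb : c ≤ b) {T : Type*} [Fintype T]
    (g : T → (Fin a × Fin b) ⊕ Fin c) (hg : Function.Injective g)
    (hc : ∀ t t', G1comp (g t) = G1comp (g t')) :
    Fintype.card T ≤ b := by
  have hinj : Function.Injective fun t => G1phi hcb (g t) := by
    intro t t' h
    apply hg
    have hcc := hc t t'
    simp only at h
    rcases ht : g t with x | x <;> rcases ht' : g t' with y | y <;>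
      rw [ht, ht'] at hcc h <;>
      simp [G1comp, G1phi, Fin.castLE_inj] at hcc h ⊢
    · exact Prod.ext hcc h
    · exact h
  calc Fintype.card T ≤ Fintype.card (Fin b) := Fintype.card_le_of_injective _ hinj
    _ = b := Fintype.card_fin b
/-- `G₁(n,k,ℓ) = K_k ∨ (d K_{ℓ-1} ∪ K_r)` contains no copy of `P_ℓ ∪ k S_{ℓ-1}`. -/
theorem G1_free (ℓ k d r n : ℕ) (hℓ : 3 ≤ ℓ) (hn : n = k + d * (ℓ - 1) + r)
    (hr : r < ℓ - 1) :
    ¬ Contains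
      (graphJoin (⊤ : SimpleGraph (Fin k))
        (copies d (⊤ : SimpleGraph (Fin (ℓ - 1))) ⊕g (⊤ : SimpleGraph (Fin r))))
      (pathGraph ℓ ⊕g copies k (starGraph' (ℓ - 1))) := by
  rintro ⟨f, hf⟩
  have hrle : r ≤ ℓ - 1 := hr.le
  -- adjacency in the right part preserves component
  have hcomp : ∀ x y, (copies d (⊤ : SimpleGraph (Fin (ℓ - 1))) ⊕g
      (⊤ : SimpleGraph (Fin r))).Adj x y → G1comp x = G1comp y := by
    rintro (x | x) (y | y) h
    · exact congrArg some h.1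
    · simp [SimpleGraph.sum] at h
    · simp [SimpleGraph.sum] at h
    · rfl
  -- Claim A: the path hits the left part
  have clA : ∃ j : Fin ℓ, ∃ a : Fin k, f (Sum.inl j) = Sum.inl a := by
    by_contra hA
    push_neg at hA
    have hg : ∀ j : Fin ℓ, ∃ y, f (Sum.inl j) = Sum.inr y := by
      intro j
      cases hfj : f (Sum.inl j) with
      | inl a => exact absurd hfj (hA j a)
      | inr y => exact ⟨y, rfl⟩
    choose g hgspec using hg
    have hginj : Function.Injective g := by
      intro j j' h
      have h2 : f (Sum.inl j) = f (Sum.inl j') := by rw [hgspec, hgspec, h]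
      exact Sum.inl_injective (hf h2)
    have hadjR : ∀ j j' : Fin ℓ, (pathGraph ℓ).Adj j j' →
        G1comp (g j) = G1comp (g j') := by
      intro j j' hjj
      have hH : (pathGraph ℓ ⊕g copies k (starGraph' (ℓ - 1))).Adj
        (Sum.inl j) (Sum.inl j') := hjj
      have hG := f.map_adj hH
      rw [hgspec j, hgspec j'] at hG
      rcases hG with h | ⟨h1, h2⟩ | ⟨h1, h2⟩
      · exact hcomp _ _ h
      · simp at h1
      · simp at h2
    have h0 : (0 : ℕ) < ℓ := by omega
    have hconst : ∀ m (hm : m < ℓ), G1comp (g ⟨m, hm⟩) = G1comp (g ⟨0, h0⟩) := by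
      intro m
      induction m with
      | zero => intro hm; rfl
      | succ p ih =>
        intro hm
        have hp : p < ℓ := by omega
        have hadj : (pathGraph ℓ).Adj ⟨p, hp⟩ ⟨p + 1, hm⟩ :=
          pathGraph_adj.mpr (Or.inl rfl)
        rw [← hadjR _ _ hadj]
        exact ih hp
    have := G1key hrle g hginj (fun t t' =>
      (hconst t.1 t.2).trans (hconst t'.1 t'.2).symm)
    simp at this
    omega
  -- Claim B: each star hits the left part
  have clB : ∀ i : Fin k, ∃ s, ∃ a : Fin k, f (Sum.inr (i, s)) = Sum.inl a := by
    intro i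
    by_contra hB
    push_neg at hB
    have hg : ∀ s, ∃ y, f (Sum.inr (i, s)) = Sum.inr y := by
      intro s
      cases hfs : f (Sum.inr (i, s)) with
      | inl a => exact absurd hfs (hB s a)
      | inr y => exact ⟨y, rfl⟩
    choose g hgspec using hg
    have hginj : Function.Injective g := by
      intro s s' h
      have h2 : f (Sum.inr (i, s)) = f (Sum.inr (i, s')) := by rw [hgspec, hgspec, h]
      have h3 := hf h2
      simpa using h3
    have hadjR : ∀ s s', (starGraph' (ℓ - 1)).Adj s s' →
        G1comp (g s) = G1comp (g s') := by
      intro s s' hss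
      have hH : (pathGraph ℓ ⊕g copies k (starGraph' (ℓ - 1))).Adj
        (Sum.inr (i, s)) (Sum.inr (i, s')) := ⟨rfl, hss⟩
      have hG := f.map_adj hH
      rw [hgspec s, hgspec s'] at hG
      rcases hG with h | ⟨h1, h2⟩ | ⟨h1, h2⟩
      · exact hcomp _ _ h
      · simp at h1
      · simp at h2
    have hconst : ∀ s, G1comp (g s) = G1comp (g (Sum.inl 0)) := by
      rintro (c | x)
      · have : c = 0 := Subsingleton.elim c 0
        rw [this]
      · exact hadjR _ _ (by simp [starGraph'])
    have := G1key hrle g hginj (fun t t' => (hconst t).trans (hconst t').symm)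
    simp at this
  -- pigeonhole
  obtain ⟨j₀, a₀, ha₀⟩ := clA
  choose s a hsa using clB
  have hinjF : Function.Injective (Sum.elim a (fun _ : Unit => a₀)) := by
    rintro (i | u) (i' | u') h <;> simp only [Sum.elim_inl, Sum.elim_inr] at h
    · have h2 : f (Sum.inr (i, s i)) = f (Sum.inr (i', s i')) := by
        rw [hsa, hsa, h]
      have h3 := hf h2
      simp only [Sum.inr.injEq, Prod.mk.injEq] at h3
      rw [h3.1]
    · exfalso
      have h2 : f (Sum.inr (i, s i)) = f (Sum.inl j₀) := by rw [hsa, ha₀, h]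
      exact absurd (hf h2) (by simp)
    · exfalso
      have h2 : f (Sum.inl j₀) = f (Sum.inr (i', s i')) := by rw [hsa, ha₀, h]
      exact absurd (hf h2) (by simp)
    · rfl
  have hcard := Fintype.card_le_of_injective _ hinjF
  simp at hcard
end

section
/- Let ℓ ≥ 4 be an even integer, k ≥ 0 an integer, and n ≥ k + ℓ/2 − 1. Then the graph K_{k+ℓ/2−1} ∨ K̄_{n−k−ℓ/2+1} contains no subgraph isomorphic to P_ℓ ∪ kS_{ℓ−1}. -/
open SimpleGraph

/-- The star with `m` leaves (a graph on `m + 1` vertices). -/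
def starGraph (m : ℕ) : SimpleGraph (Fin 1 ⊕ Fin m) :=
  completeBipartiteGraph (Fin 1) (Fin m)

/-- `K_{k+ℓ/2-1} ∨ K̄_{n-k-ℓ/2+1}` contains no copy of `P_ℓ ∪ k S_{ℓ-1}` for even `ℓ`. -/
theorem G2_free_one_path (ℓ k n : ℕ) (hℓ : 4 ≤ ℓ) (heven : Even ℓ)
    (hn : k + ℓ / 2 - 1 ≤ n) :
    ¬ Contains
      (graphJoin (⊤ : SimpleGraph (Fin (k + ℓ / 2 - 1)))
        (⊥ : SimpleGraph (Fin (n - k - ℓ / 2 + 1))))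
      (pathGraph ℓ ⊕g copies k (_root_.starGraph (ℓ - 1))) := by
  obtain ⟨t, ht⟩ := heven
  have hm2 : 2 ≤ ℓ / 2 := by omega
  set m := ℓ / 2 with hm
  have hℓ2 : ℓ = 2 * m := by omega
  rintro ⟨f, hf⟩
  -- the matching endpoints in H
  let a : Fin (k + m) → Fin ℓ ⊕ (Fin k × (Fin 1 ⊕ Fin (ℓ - 1))) := fun i =>
    if h : (i : ℕ) < m then Sum.inl ⟨2 * i, by omega⟩
    else Sum.inr (⟨(i : ℕ) - m, by omega⟩, Sum.inl ⟨0, by omega⟩)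
  let b : Fin (k + m) → Fin ℓ ⊕ (Fin k × (Fin 1 ⊕ Fin (ℓ - 1))) := fun i =>
    if h : (i : ℕ) < m then Sum.inl ⟨2 * i + 1, by omega⟩
    else Sum.inr (⟨(i : ℕ) - m, by omega⟩, Sum.inr ⟨0, by omega⟩)
  have hab : ∀ i, (pathGraph ℓ ⊕g copies k (_root_.starGraph (ℓ - 1))).Adj (a i) (b i) := by
    intro i
    by_cases h : (i : ℕ) < m
    · simp only [a, b, dif_pos h]
      show (pathGraph ℓ).Adj _ _
      simp [pathGraph_adj]
    · simp only [a, b, dif_neg h]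
      show (copies k (_root_.starGraph (ℓ - 1))).Adj _ _
      simp [copies, _root_.starGraph]
  have key : ∀ i, (f (a i)).isLeft ∨ (f (b i)).isLeft := by
    intro i
    have hadj := f.map_adj (hab i)
    rcases hx : f (a i) with x | x
    · left; simp
    rcases hy : f (b i) with y | y
    · right; simp
    rw [hx, hy] at hadj
    exfalso
    simpa [graphJoin] using hadj
  -- choose for each i a vertex whose image is in the left part
  let v : Fin (k + m) → Fin ℓ ⊕ (Fin k × (Fin 1 ⊕ Fin (ℓ - 1))) := fun i =>
    if (f (a i)).isLeft then a i else b i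
  have hv : ∀ i, (f (v i)).isLeft := by
    intro i
    by_cases h : (f (a i)).isLeft
    · simpa [v, h] using h
    · have := (key i).resolve_left h
      simpa [v, h] using this
  have hvmem : ∀ i, v i = a i ∨ v i = b i := by
    intro i; by_cases h : (f (a i)).isLeft <;> simp [v, h]
  -- an index-extraction function showing v is injective
  let idx : Fin ℓ ⊕ (Fin k × (Fin 1 ⊕ Fin (ℓ - 1))) → ℕ :=
    Sum.elim (fun x => (x : ℕ) / 2) (fun p => (p.1 : ℕ) + m)
  have hidxa : ∀ i, idx (a i) = (i : ℕ) := by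
    intro i
    by_cases h : (i : ℕ) < m
    · simp only [a, dif_pos h, idx, Sum.elim_inl]; omega
    · simp only [a, dif_neg h, idx, Sum.elim_inr]; omega
  have hidxb : ∀ i, idx (b i) = (i : ℕ) := by
    intro i
    by_cases h : (i : ℕ) < m
    · simp only [b, dif_pos h, idx, Sum.elim_inl]; omega
    · simp only [b, dif_neg h, idx, Sum.elim_inr]; omega
  have hidxv : ∀ i, idx (v i) = (i : ℕ) := by
    intro i
    rcases hvmem i with h | h <;> rw [h]
    · exact hidxa i
    · exact hidxb i
  have hvinj : Function.Injective v := by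
    intro i j hij
    have : idx (v i) = idx (v j) := by rw [hij]
    rw [hidxv, hidxv] at this
    exact Fin.ext this
  let g : Fin (k + m) → Fin (k + m - 1) := fun i => (f (v i)).getLeft (hv i)
  have hginj : Function.Injective g := by
    intro i j hij
    apply hvinj
    apply hf
    have h1 : f (v i) = Sum.inl (g i) := Sum.eq_left_iff_getLeft_eq.mpr ⟨hv i, rfl⟩
    have h2 : f (v j) = Sum.inl (g j) := Sum.eq_left_iff_getLeft_eq.mpr ⟨hv j, rfl⟩
    rw [h1, h2, hij]
  have := Fintype.card_le_of_injective g hginj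
  simp only [Fintype.card_fin] at this
  omega
end
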